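/- Let p be a probability distribution on [n] = {1,…,n} and let m ∈ ℕ. For a tuple (s_1,…,s_m) ∈ [n]^m, define a_i := 1 + #{j ∈ [m] : s_j = i} for each i ∈ [n]. Then the expectation, over (s_1,…,s_m) drawn from the m-fold product of p, of ∑_{i=1}^n p_i² / a_i is at most 1/(m+1). -/

import Mathlib

open Finset

private lemma sum_prod_mass {n : ℕ} (p : Fin n → ℝ) (hp1 : ∑ i, p i = 1) :
    ∀ N, ∑ t : Fin N → Fin n, ∏ j, p (t j) = 1 := by
  intro N
  induction N with
  | zero => simp
  | succ N ih =>
    rw [← Equiv.sum_comp (Fin.consEquiv fun _ => Fin n) (fun t => ∏ j, p (t j)),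
      Fintype.sum_prod_type]
    have : ∀ (x : Fin n) (s : Fin N → Fin n),
        (∏ j, p ((Fin.consEquiv fun _ => Fin n) (x, s) j)) = p x * ∏ j, p (s j) := by
      intro x s
      rw [Fin.prod_univ_succ]
      simp [Fin.consEquiv]
    simp_rw [this, ← Finset.mul_sum, ih, mul_one, hp1]

theorem stmt2 {n : ℕ} (p : Fin n → ℝ) (hp0 : ∀ i, 0 ≤ p i) (hp1 : ∑ i, p i = 1)
    (m : ℕ) :
    ∑ s : Fin m → Fin n, (∏ j, p (s j)) *
      (∑ i, p i ^ 2 / (1 + ((Finset.univ.filter fun j => s j = i).card : ℝ)))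
    ≤ 1 / (m + 1) := by
  classical
  -- the term of the "big" sum over (m+1)-tuples
  set G : Fin (m+1) → (Fin (m+1) → Fin n) → Fin n → ℝ := fun k t i =>
    (∏ j, p (t j)) * (if t k = i then (1:ℝ) else 0) /
      ((Finset.univ.filter fun j => t j = i).card : ℝ) with hG
  -- symmetry: ∑_t G k t i is independent of k
  have symm : ∀ (i : Fin n) (k : Fin (m+1)),
      ∑ t : Fin (m+1) → Fin n, G k t i = ∑ t : Fin (m+1) → Fin n, G 0 t i := by
    intro i k
    have := Equiv.sum_comp ((Equiv.swap k 0).arrowCongr (Equiv.refl (Fin n)))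
      (fun t => G k t i)
    rw [← this]
    refine Fintype.sum_congr _ _ fun t => ?_
    have harr : ∀ j, ((Equiv.swap k 0).arrowCongr (Equiv.refl (Fin n))) t j
        = t (Equiv.swap k 0 j) := by
      intro j
      simp [Equiv.arrowCongr, Equiv.swap_inv]
    simp only [hG, harr]
    congr 1
    · congr 1
      · exact Equiv.prod_comp (Equiv.swap k 0) (fun j => p (t j))
      · rw [Equiv.swap_apply_left]
    · norm_cast
      apply Finset.card_nbij (Equiv.swap k 0)
      · intro a ha; simp_all
      · intro a ha b hb hab; simpa using (Equiv.swap k 0).injective hab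
      · intro b hb
        refine ⟨Equiv.swap k 0 b, ?_, by simp⟩
        simp_all
  -- summing over k
  have sumk : ∀ i : Fin n,
      (m+1 : ℝ) * ∑ t : Fin (m+1) → Fin n, G 0 t i ≤ 1 := by
    intro i
    have h1 : (m+1 : ℝ) * ∑ t : Fin (m+1) → Fin n, G 0 t i
        = ∑ k : Fin (m+1), ∑ t : Fin (m+1) → Fin n, G k t i := by
      simp_rw [symm i]
      rw [Finset.sum_const, card_univ, Fintype.card_fin, nsmul_eq_mul]
      push_cast; ring
    rw [h1, Finset.sum_comm]
    calc ∑ t : Fin (m+1) → Fin n, ∑ k, G k t i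
        ≤ ∑ t : Fin (m+1) → Fin n, ∏ j, p (t j) := by
          refine Finset.sum_le_sum fun t _ => ?_
          have hc : ∑ k : Fin (m+1), (if t k = i then (1:ℝ) else 0)
              = ((Finset.univ.filter fun j => t j = i).card : ℝ) := by
            rw [Finset.card_filter]; push_cast; rfl
          have : ∑ k, G k t i = (∏ j, p (t j)) *
              (((Finset.univ.filter fun j => t j = i).card : ℝ) /
               ((Finset.univ.filter fun j => t j = i).card : ℝ)) := by
            simp only [hG, div_eq_mul_inv, ← Finset.sum_mul, ← Finset.mul_sum, hc]
            ring
          rw [this]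
          have hpt : 0 ≤ ∏ j, p (t j) := Finset.prod_nonneg fun j _ => hp0 (t j)
          rcases eq_or_ne ((Finset.univ.filter fun j => t j = i).card : ℝ) 0 with h | h
          · rw [h]; simpa using hpt
          · rw [div_self h, mul_one]
      _ = 1 := sum_prod_mass p hp1 (m+1)
  -- per-i bound after "adding one sample"
  have key : ∀ i : Fin n,
      ∑ s : Fin m → Fin n, (∏ j, p (s j)) *
        (p i / (1 + ((Finset.univ.filter fun j => s j = i).card : ℝ)))
      ≤ 1 / (m+1) := by
    intro i
    have step : ∑ s : Fin m → Fin n, (∏ j, p (s j)) *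
        (p i / (1 + ((Finset.univ.filter fun j => s j = i).card : ℝ)))
        = ∑ t : Fin (m+1) → Fin n, G 0 t i := by
      rw [← Equiv.sum_comp (Fin.consEquiv fun _ => Fin n) (fun t => G 0 t i),
        Fintype.sum_prod_type]
      -- terms with x ≠ i vanish
      rw [Finset.sum_eq_single i]
      · refine Fintype.sum_congr _ _ fun s => ?_
        set t0 : Fin (m+1) → Fin n := Fin.cons i s with ht0
        have hcons : ∀ j : Fin (m+1), (Fin.consEquiv fun _ => Fin n) (i, s) j
            = t0 j := fun _ => rfl
        simp only [hG, hcons]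
        have h1 : (∏ j, p (t0 j)) = p i * ∏ j, p (s j) := by
          rw [Fin.prod_univ_succ]; simp [ht0]
        have h2 : ((Finset.univ.filter fun j => t0 j = i).card : ℝ)
            = 1 + ((Finset.univ.filter fun j => s j = i).card : ℝ) := by
          rw [Finset.card_filter, Finset.card_filter, Fin.sum_univ_succ]
          push_cast
          simp [ht0]
        rw [h1, h2]
        have h3 : t0 0 = i := rfl
        simp only [h3, if_pos rfl, if_true]
        field_simp
      · intro x _ hx
        refine Finset.sum_eq_zero fun s _ => ?_
        have hcons : (Fin.consEquiv fun _ => Fin n) (x, s) 0 = x := rfl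
        simp [hG, hcons, hx]
      · intro h; exact absurd (Finset.mem_univ i) h
    rw [step]
    have hm : (0:ℝ) < m + 1 := by positivity
    rw [div_eq_mul_inv, one_mul, ← mul_le_mul_iff_right₀ hm, mul_inv_cancel₀ hm.ne']
    exact sumk i
  -- put it together
  have swap : ∑ s : Fin m → Fin n, (∏ j, p (s j)) *
      (∑ i, p i ^ 2 / (1 + ((Finset.univ.filter fun j => s j = i).card : ℝ)))
      = ∑ i, p i * ∑ s : Fin m → Fin n, (∏ j, p (s j)) *
        (p i / (1 + ((Finset.univ.filter fun j => s j = i).card : ℝ))) := by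
    simp_rw [Finset.mul_sum]
    rw [Finset.sum_comm]
    refine Finset.sum_congr rfl fun i _ => ?_
    refine Finset.sum_congr rfl fun s _ => ?_
    ring
  rw [swap]
  calc ∑ i, p i * ∑ s : Fin m → Fin n, (∏ j, p (s j)) *
        (p i / (1 + ((Finset.univ.filter fun j => s j = i).card : ℝ)))
      ≤ ∑ i, p i * (1 / (m+1)) := by
        refine Finset.sum_le_sum fun i _ => ?_
        exact mul_le_mul_of_nonneg_left (key i) (hp0 i)
    _ = 1 / (m+1) := by rw [← Finset.sum_mul, hp1, one_mul]
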